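/- For x ≥ 3, the entropy of square-free words over x letters satisfies s⁻(x) ≥ (1/3)·log(x-2). In particular it is strictly positive for x > 3. -/

import Mathlib

/-- A word (list) is square-free if it contains no nonempty factor of the form `u ++ u`. -/
def SqFree {α : Type*} (l : List α) : Prop :=
  ∀ u : List α, u ≠ [] → ¬ (u ++ u) <:+: l

/-- The number of square-free words of length `n` over an alphabet of `x` letters. -/
noncomputable def sqFreeCount (x n : ℕ) : ℕ :=
  Nat.card {l : List (Fin x) // l.length = n ∧ SqFree l}

open Filter

namespace SqFreeAux

/-- The Thue–Morse word. -/
def tm : ℕ → Bool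
  | 0 => false
  | n+1 =>
    if (n+1) % 2 = 0 then tm ((n+1)/2) else !tm ((n+1)/2)
decreasing_by all_goals exact Nat.div_lt_self (Nat.succ_pos n) one_lt_two

lemma tm_succ (n : ℕ) :
    tm (n+1) = if (n+1) % 2 = 0 then tm ((n+1)/2) else !tm ((n+1)/2) := by
  rw [tm]

lemma tm_even (n : ℕ) : tm (2*n) = tm n := by
  cases n with
  | zero => rfl
  | succ m =>
    have h : 2*(m+1) = (2*m+1)+1 := by ring
    rw [h, tm_succ]
    have h1 : (2*m+1+1) % 2 = 0 := by omega
    have h2 : (2*m+1+1)/2 = m+1 := by omega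
    rw [if_pos h1, h2]

lemma tm_odd (n : ℕ) : tm (2*n+1) = !tm n := by
  have h : 2*n+1 = (2*n)+1 := rfl
  rw [h, tm_succ]
  have h1 : ¬ ((2*n+1) % 2 = 0) := by omega
  have h2 : (2*n+1)/2 = n := by omega
  rw [if_neg h1, h2]

lemma tm_adj_odd {m : ℕ} (h : tm m = tm (m+1)) : m % 2 = 1 := by
  by_contra hc
  have h0 : m % 2 = 0 := by omega
  obtain ⟨n, rfl⟩ : ∃ n, m = 2*n := ⟨m/2, by omega⟩
  rw [tm_even, tm_odd] at h
  cases tm n <;> simp_all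

lemma tm_no_triple (m : ℕ) : ¬ (tm m = tm (m+1) ∧ tm (m+1) = tm (m+2)) := by
  rintro ⟨h1, h2⟩
  have o1 := tm_adj_odd h1
  have o2 : (m+1) % 2 = 1 := tm_adj_odd (by rw [show m+1+1 = m+2 by ring]; exact h2)
  omega

lemma tm_alt {i k : ℕ} (h : ∀ j < k, tm (i+j) ≠ tm (i+j+1)) :
    tm (i+k) = if k % 2 = 0 then tm i else !tm i := by
  induction k with
  | zero => simp
  | succ k ih =>
    have hk := ih (fun j hj => h j (by omega))
    have hne := h k (by omega)
    have hstep : tm (i+(k+1)) = !tm (i+k) := by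
      rw [show i+(k+1) = i+k+1 by ring]
      cases h1 : tm (i+k) <;> cases h2 : tm (i+k+1) <;> simp_all
    rw [hstep, hk]
    by_cases h2 : k % 2 = 0
    · rw [if_pos h2, if_neg (by omega)]
    · rw [if_neg h2, if_pos (by omega), Bool.not_not]

theorem tm_overlap_free : ∀ k, 0 < k → ∀ i, ¬ (∀ j ≤ k, tm (i+j) = tm (i+j+k)) := by
  intro k
  induction k using Nat.strong_induction_on with
  | _ k IH =>
  intro hk i H
  rcases Nat.even_or_odd k with he | ho
  · obtain ⟨m, hm⟩ := he
    have hm1 : 0 < m := by omega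
    rcases Nat.even_or_odd i with hie | hio
    · obtain ⟨c, hc⟩ := hie
      refine IH m (by omega) hm1 c ?_
      intro j hj
      have h1 := H (2*j) (by omega)
      rw [show i + 2*j + k = 2*(c+j+m) by omega, show i + 2*j = 2*(c+j) by omega,
        tm_even, tm_even] at h1
      exact h1
    · obtain ⟨c, hc⟩ := hio
      refine IH m (by omega) hm1 c ?_
      intro j hj
      have h1 := H (2*j) (by omega)
      rw [show i + 2*j + k = 2*(c+j+m)+1 by omega, show i + 2*j = 2*(c+j)+1 by omega,
        tm_odd, tm_odd] at h1
      simpa using h1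
  · have hodd : k % 2 = 1 := Nat.odd_iff.mp ho
    by_cases hp : ∃ j, j < k ∧ tm (i+j) = tm (i+j+1)
    · obtain ⟨j, hj, hpair⟩ := hp
      have o1 : (i+j) % 2 = 1 := tm_adj_odd hpair
      have h1 := H j (le_of_lt hj)
      have h2 := H (j+1) hj
      rw [show i+(j+1)+k = i+j+k+1 by ring, show i+(j+1) = i+j+1 by ring] at h2
      have hpair2 : tm (i+j+k) = tm (i+j+k+1) := by
        rw [← h1, ← h2]; exact hpair
      have o2 : (i+j+k) % 2 = 1 := tm_adj_odd hpair2
      omega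
    · push_neg at hp
      have := tm_alt (i := i) (k := k) (fun j hj => hp j hj)
      rw [if_neg (by omega)] at this
      have h0 := H 0 (Nat.zero_le k)
      rw [Nat.add_zero] at h0
      rw [this] at h0
      simp at h0

/-- The ternary square-free word: differences of Thue–Morse. -/
def dw (n : ℕ) : Fin 3 :=
  if tm n = tm (n+1) then 0 else if tm (n+1) then 1 else 2

theorem dw_square_free : ∀ k, 0 < k → ∀ i, ¬ (∀ j < k, dw (i+j) = dw (i+j+k)) := by
  intro k hk i H
  have key : ∀ j ≤ k, ((tm (i+j) = tm (i+j+k)) ↔ (tm i = tm (i+k))) := by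
    intro j hj
    induction j with
    | zero => rw [Nat.add_zero]
    | succ j ih =>
      have hiff := ih (by omega)
      have hd := H j (by omega)
      have step : (tm (i+j) = tm (i+j+k)) ↔ (tm (i+(j+1)) = tm (i+(j+1)+k)) := by
        rw [show i+(j+1)+k = i+j+k+1 by ring, show i+(j+1) = i+j+1 by ring]
        revert hd
        unfold dw
        cases tm (i+j) <;> cases tm (i+j+1) <;> cases tm (i+j+k) <;>
          cases tm (i+j+k+1) <;> simp <;> decide
      rw [← step]
      exact hiff
  by_cases he : tm i = tm (i+k)
  · exact tm_overlap_free k hk i (fun j hj => (key j hj).mpr he)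
  · have hadj : ∀ j, j < k → tm (i+j) = tm (i+j+1) := by
      intro j hj
      have hne : ¬ (tm (i+j) = tm (i+j+k)) := fun h => he ((key j (le_of_lt hj)).mp h)
      have hd := H j hj
      revert hd hne
      unfold dw
      cases tm (i+j) <;> cases tm (i+j+1) <;> cases tm (i+j+k) <;>
        cases tm (i+j+k+1) <;> simp <;> decide
    rcases Nat.lt_or_ge k 2 with h2 | h2
    · have hk1 : k = 1 := by omega
      subst hk1
      have h1 := hadj 0 (by omega)
      rw [Nat.add_zero] at h1
      exact he h1
    · have h1 := hadj 0 (by omega)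
      rw [Nat.add_zero] at h1
      have h2' := hadj 1 h2
      refine tm_no_triple i ⟨h1, ?_⟩
      rw [show i+2 = i+1+1 by ring]
      exact h2'


variable (x : ℕ)

noncomputable def bl (hx : 3 ≤ x) (n : ℕ) : Fin x :=
  ⟨(dw n).val, lt_of_lt_of_le (dw n).isLt hx⟩

def sp (hx : 3 ≤ x) (c : Fin (x-3)) : Fin x := ⟨3 + c.val, by have := c.isLt; omega⟩

noncomputable def blocks (hx : 3 ≤ x) : List (Bool × Fin (x-3)) → ℕ → List (Fin x)
  | [], _ => []
  | c :: cs, j =>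
    (if c.1 then [bl x hx (2*j), bl x hx (2*j+1), sp x hx c.2]
     else [bl x hx (2*j), sp x hx c.2, bl x hx (2*j+1)]) ++ blocks hx cs (j+1)

lemma blocks_nil (hx : 3 ≤ x) (j : ℕ) : blocks x hx [] j = [] := rfl

lemma blocks_cons (hx : 3 ≤ x) (c : Bool × Fin (x-3)) (cs : List (Bool × Fin (x-3))) (j : ℕ) :
    blocks x hx (c :: cs) j =
    (if c.1 then [bl x hx (2*j), bl x hx (2*j+1), sp x hx c.2]
     else [bl x hx (2*j), sp x hx c.2, bl x hx (2*j+1)]) ++ blocks x hx cs (j+1) := rfl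

noncomputable def baseword (hx : 3 ≤ x) (i n : ℕ) : List (Fin x) :=
  (List.range' i n).map (bl x hx)

lemma length_blocks (hx : 3 ≤ x) (cs : List (Bool × Fin (x-3))) (j : ℕ) :
    (blocks x hx cs j).length = 3 * cs.length := by
  induction cs generalizing j with
  | nil => simp [blocks_nil]
  | cons c cs ih =>
    rw [blocks_cons, List.length_append, ih (j+1)]
    split <;> simp <;> ring

lemma bl_val_lt (hx : 3 ≤ x) (n : ℕ) : (bl x hx n).val < 3 := (dw n).isLt

lemma sp_val_ge (hx : 3 ≤ x) (c : Fin (x-3)) : ¬ (sp x hx c).val < 3 := by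
  simp [sp]

lemma filter_blocks (hx : 3 ≤ x) (cs : List (Bool × Fin (x-3))) (j : ℕ) :
    (blocks x hx cs j).filter (fun a => a.val < 3) = baseword x hx (2*j) (2*cs.length) := by
  induction cs generalizing j with
  | nil => simp [blocks_nil, baseword]
  | cons c cs ih =>
    rw [blocks_cons, List.filter_append, ih (j+1)]
    have hb : ∀ n, (decide ((bl x hx n).val < 3)) = true := fun n => by
      simpa using bl_val_lt x hx n
    have hs : (decide ((sp x hx c.2).val < 3)) = false := by
      simpa using sp_val_ge x hx c.2
    have hbw : baseword x hx (2*j) (2*(c::cs).length)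
        = bl x hx (2*j) :: bl x hx (2*j+1) :: baseword x hx (2*(j+1)) (2*cs.length) := by
      unfold baseword
      rw [show 2*(c::cs).length = (2*cs.length)+1+1 from by rw [List.length_cons]; ring,
        List.range'_succ, List.range'_succ]
      simp only [List.map_cons]
      rw [show 2*j+1+1 = 2*(j+1) from by ring]
    rw [hbw]
    split <;> simp [List.filter_cons, hb, hs]

lemma sqfree_baseword (hx : 3 ≤ x) (i n : ℕ) : SqFree (baseword x hx i n) := by
  intro u hu hinf
  obtain ⟨s, t, hst⟩ := hinf
  set k := u.length with hk
  have hkpos : 0 < k := List.length_pos_iff.mpr hu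
  have hlen : s.length + (k + k) + t.length = n := by
    have := congrArg List.length hst
    simp [baseword] at this
    omega
  have hbw : ∀ m, m < n → (baseword x hx i n)[m]? = some (bl x hx (i + m)) := by
    intro m hm
    have hm' : m < (baseword x hx i n).length := by simp [baseword]; exact hm
    rw [List.getElem?_eq_getElem hm']
    simp [baseword, List.getElem_range']
  have key : ∀ j, j < k → bl x hx (i + (s.length + j)) = bl x hx (i + (s.length + k + j)) := by
    intro j hj
    have e1 : (s ++ (u ++ u) ++ t)[s.length + j]? = u[j]? := by
      rw [List.getElem?_append_left (by simp; omega),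
        List.getElem?_append_right (by omega),
        List.getElem?_append_left (by omega)]
      congr 1
      omega
    have e2 : (s ++ (u ++ u) ++ t)[s.length + k + j]? = u[j]? := by
      rw [List.getElem?_append_left (by simp; omega),
        List.getElem?_append_right (by omega),
        List.getElem?_append_right (by omega)]
      congr 1
      omega
    have h1 := hbw (s.length + j) (by omega)
    have h2 := hbw (s.length + k + j) (by omega)
    rw [← hst] at h1 h2
    rw [e1] at h1
    rw [e2] at h2
    have := h1.symm.trans h2
    exact Option.some_injective _ this
  refine dw_square_free k hkpos (i + s.length) ?_
  intro j hj
  have := key j hj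
  have hv := congrArg Fin.val this
  simp only [bl] at hv
  rw [show i + s.length + j + k = i + (s.length + k + j) by ring,
    show i + s.length + j = i + (s.length + j) by ring]
  exact Fin.ext hv


/-- no two adjacent letters are both special -/
lemma chain_blocks (hx : 3 ≤ x) (cs : List (Bool × Fin (x-3))) (j : ℕ) :
    List.Chain' (fun a b : Fin x => a.val < 3 ∨ b.val < 3) (blocks x hx cs j) := by
  induction cs generalizing j with
  | nil => simp [blocks_nil, List.Chain']
  | cons c cs ih =>
    rw [blocks_cons]
    refine List.IsChain.append ?_ (ih (j+1)) ?_
    · split <;>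
        simp [List.isChain_cons_cons, bl_val_lt] 
    · intro a _ b hb
      right
      cases cs with
      | nil => simp [blocks_nil] at hb
      | cons c' cs' =>
        rw [blocks_cons] at hb
        rcases c' with ⟨b1, c2⟩
        cases b1 <;> simp at hb <;> rw [← hb] <;> exact bl_val_lt x hx _
lemma pair_not_special (hx : 3 ≤ x) (cs : List (Bool × Fin (x-3))) (j : ℕ)
    {a b : Fin x} (h : [a, b] <:+: blocks x hx cs j) : a.val < 3 ∨ b.val < 3 := by
  obtain ⟨s, t, hst⟩ := h
  have hc := chain_blocks x hx cs j
  rw [← hst] at hc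
  rw [List.append_assoc] at hc
  have := hc.right_of_append
  rw [show [a,b] ++ t = a :: b :: t from rfl] at this
  exact (List.isChain_cons_cons.mp this).1

lemma sqfree_blocks (hx : 3 ≤ x) (cs : List (Bool × Fin (x-3))) :
    SqFree (blocks x hx cs 0) := by
  intro u hu hinf
  by_cases hbase : u.filter (fun a => a.val < 3) = []
  · have hmem : ∀ a ∈ u, ¬ (a.val < 3) := by
      intro a ha
      have := List.filter_eq_nil_iff.mp hbase a ha
      simpa using this
    obtain ⟨a, rest, rfl⟩ : ∃ a rest, u = a :: rest := by
      cases u with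
      | nil => exact absurd rfl hu
      | cons a rest => exact ⟨a, rest, rfl⟩
    have hpair : ∃ b, [a, b] <:+: blocks x hx cs 0 ∧ ¬ (b.val < 3) := by
      cases rest with
      | nil =>
        refine ⟨a, ?_, hmem a (by simp)⟩
        simpa using hinf
      | cons b rest' =>
        refine ⟨b, ?_, hmem b (by simp)⟩
        refine List.IsInfix.trans ?_ hinf
        exact ⟨[], rest' ++ (a :: b :: rest'), by simp⟩
    obtain ⟨b, hpb, hb3⟩ := hpair
    rcases pair_not_special x hx cs 0 hpb with h | h
    · exact hmem a (by simp) h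
    · exact hb3 h
  · have h1 := List.IsInfix.filter (fun a => a.val < 3) hinf
    rw [List.filter_append, filter_blocks] at h1
    have h0 : 2 * 0 = 0 := rfl
    exact sqfree_baseword x hx (2*0) (2*cs.length) _ hbase h1

lemma blocks_inj (hx : 3 ≤ x) :
    ∀ (cs1 cs2 : List (Bool × Fin (x-3))) (j : ℕ), cs1.length = cs2.length →
      blocks x hx cs1 j = blocks x hx cs2 j → cs1 = cs2 := by
  intro cs1
  induction cs1 with
  | nil =>
    intro cs2 j hl _
    cases cs2 with
    | nil => rfl
    | cons d ds => simp at hl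
  | cons c cs ih =>
    intro cs2 j hl heq
    cases cs2 with
    | nil => simp at hl
    | cons d ds =>
      rcases c with ⟨cb, cv⟩
      rcases d with ⟨db, dv⟩
      have hspbl : ∀ (c' : Fin (x-3)) n, sp x hx c' ≠ bl x hx n := by
        intro c' n h
        have := congrArg Fin.val h
        have h3 := bl_val_lt x hx n
        simp [sp] at this
        omega
      rw [blocks_cons, blocks_cons] at heq
      cases cb <;> cases db <;> simp at heq
      · obtain ⟨h1, h3⟩ := heq
        have : cv = dv := by
          have := congrArg Fin.val h1
          simp [sp] at this
          exact Fin.ext this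
        rw [this, ih ds (j+1) (by simpa using hl) h3]
      · exact absurd heq.1 (hspbl cv (2*j+1))
      · exact absurd heq.1.symm (hspbl dv (2*j+1))
      · obtain ⟨h1, h3⟩ := heq
        have : cv = dv := by
          have := congrArg Fin.val h1
          simp [sp] at this
          exact Fin.ext this
        rw [this, ih ds (j+1) (by simpa using hl) h3]

instance sqfree_finite (n : ℕ) : Finite {l : List (Fin x) // l.length = n ∧ SqFree l} := by
  refine Finite.of_injective
    (fun w : {l : List (Fin x) // l.length = n ∧ SqFree l} =>
      (fun i : Fin n => w.1.get (Fin.cast w.2.1.symm i))) ?_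
  intro w1 w2 h
  apply Subtype.ext
  apply List.ext_getElem (by rw [w1.2.1, w2.2.1])
  intro m h1 h2
  have hm : m < n := by rw [← w1.2.1]; exact h1
  have := congrFun h ⟨m, hm⟩
  simpa [List.get_eq_getElem] using this

lemma count_ge (hx4 : 4 ≤ x) (m : ℕ) : (x-2)^m ≤ sqFreeCount x (3*m) := by
  have hx : 3 ≤ x := by omega
  set F : (Fin m → Bool × Fin (x-3)) → {l : List (Fin x) // l.length = 3*m ∧ SqFree l} :=
    fun v => ⟨blocks x hx (List.ofFn v) 0,
      by rw [length_blocks]; simp, sqfree_blocks x hx _⟩ with hF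
  have hFinj : Function.Injective F := by
    intro v1 v2 h
    have h1 : blocks x hx (List.ofFn v1) 0 = blocks x hx (List.ofFn v2) 0 :=
      congrArg Subtype.val h
    have := blocks_inj x hx _ _ 0 (by simp) h1
    exact List.ofFn_injective this
  have hcard := Nat.card_le_card_of_injective F hFinj
  have hdom : Nat.card (Fin m → Bool × Fin (x-3)) = (2*(x-3))^m := by
    rw [Nat.card_eq_fintype_card, Fintype.card_fun]
    simp
  calc (x-2)^m ≤ (2*(x-3))^m := Nat.pow_le_pow_left (by omega) m
    _ ≤ sqFreeCount x (3*m) := by rw [← hdom]; exact hcard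


end SqFreeAux

/-- For `x ≥ 3`, the entropy of square-free words in `x` letters is at least
`(1/3) * log (x - 2)`; in particular it is strictly positive for `x > 3`. -/

theorem sqFree_entropy_lower_bound (x : ℕ) (hx : 3 ≤ x) (L : ℝ)
    (hL : Tendsto (fun n : ℕ => Real.log (sqFreeCount x n) / n) atTop (nhds L)) :
    (1 / 3) * Real.log ((x : ℝ) - 2) ≤ L ∧ (3 < x → 0 < L) := by
  have hnonneg : 0 ≤ L := by
    refine ge_of_tendsto hL ?_
    filter_upwards with n
    refine div_nonneg ?_ (Nat.cast_nonneg n)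
    rcases Nat.eq_zero_or_pos (sqFreeCount x n) with h | h
    · simp [h]
    · exact Real.log_nonneg (by exact_mod_cast h)
  rcases eq_or_lt_of_le hx with h3 | h4
  · constructor
    · rw [← h3]
      norm_num
      exact hnonneg
    · intro hlt
      omega
  · have hx4 : 4 ≤ x := h4
    have hcast : ((x-2:ℕ):ℝ) = (x:ℝ) - 2 := by
      rw [Nat.cast_sub (by omega)]
      norm_num
    have hmain : (1/3) * Real.log ((x:ℝ) - 2) ≤ L := by
      have h3m : Tendsto (fun m : ℕ => 3*m) atTop atTop :=
        Filter.tendsto_atTop_mono (fun m => by simp only [id_eq]; omega) Filter.tendsto_id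
      have hcomp : Tendsto (fun m : ℕ => Real.log (sqFreeCount x (3*m)) / ((3*m : ℕ):ℝ))
          atTop (nhds L) := hL.comp h3m
      refine ge_of_tendsto hcomp ?_
      filter_upwards [Filter.eventually_ge_atTop 1] with m hm
      have hcount := SqFreeAux.count_ge x hx4 m
      have hpos : (0:ℝ) < ((x-2:ℕ):ℝ)^m := by
        apply pow_pos
        have : (0:ℕ) < x-2 := by omega
        exact_mod_cast this
      have hlog : (m:ℝ) * Real.log ((x-2:ℕ):ℝ) ≤ Real.log (sqFreeCount x (3*m)) := by
        rw [← Real.log_pow]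
        apply Real.log_le_log hpos
        push_cast
        exact_mod_cast hcount
      have hm3 : (0:ℝ) < ((3*m:ℕ):ℝ) := by
        have : (0:ℕ) < 3*m := by omega
        exact_mod_cast this
      rw [← hcast, le_div_iff₀ hm3]
      calc 1/3 * Real.log ((x-2:ℕ):ℝ) * ((3*m:ℕ):ℝ)
          = (m:ℝ) * Real.log ((x-2:ℕ):ℝ) := by push_cast; ring
        _ ≤ Real.log (sqFreeCount x (3*m)) := hlog
    refine ⟨hmain, fun _ => lt_of_lt_of_le ?_ hmain⟩
    have h1 : (1:ℝ) < (x:ℝ) - 2 := by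
      have : (4:ℝ) ≤ (x:ℝ) := by exact_mod_cast hx4
      linarith
    have := Real.log_pos h1
    norm_num
    linarith
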